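/- Let A, B be n×n complex positive definite matrices. For every t ∈ [0, 1]: A^{-1} ♯ (A ♮_t B) ≤ A^{-1} ♯ (A ◇_t B) and B^{-1} ♯ (A ♮_t B) ≤ B^{-1} ♯ (A ◇_t B) in the Loewner order. -/

import Mathlib

open scoped ComplexOrder Matrix

noncomputable section

/-- Real power of a (positive definite) matrix via the continuous functional calculus. -/
def mpow {n : ℕ} (A : Matrix (Fin n) (Fin n) ℂ) (t : ℝ) : Matrix (Fin n) (Fin n) ℂ :=
  cfc (fun x : ℝ => x ^ t) A

/-- The matrix logarithm of a (positive definite) matrix via the continuous functional calculus. -/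
def mlog {n : ℕ} (A : Matrix (Fin n) (Fin n) ℂ) : Matrix (Fin n) (Fin n) ℂ :=
  cfc Real.log A

/-- The metric geometric mean `A ♯ₜ B = A^{1/2} (A^{-1/2} B A^{-1/2})^t A^{1/2}`.
`A ♯ B` is `gmean A B (1/2)`. -/
def gmean {n : ℕ} (A B : Matrix (Fin n) (Fin n) ℂ) (t : ℝ) : Matrix (Fin n) (Fin n) ℂ :=
  mpow A (1/2) * mpow (mpow A (-(1/2)) * B * mpow A (-(1/2))) t * mpow A (1/2)

/-- The Loewner order: `A ≤ B` iff `B - A` is positive semidefinite. -/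
def LoewnerLE {n : ℕ} (A B : Matrix (Fin n) (Fin n) ℂ) : Prop :=
  (B - A).PosSemidef

/-- The near order: `A ⪯ B` iff `I ≤ A⁻¹ ♯ B` in the Loewner order. -/
def NearLE {n : ℕ} (A B : Matrix (Fin n) (Fin n) ℂ) : Prop :=
  LoewnerLE 1 (gmean A⁻¹ B (1/2))

/-- The spectral geometric mean `A ♮ₜ B = (A⁻¹ ♯ B)^t A (A⁻¹ ♯ B)^t`. -/
def smean {n : ℕ} (A B : Matrix (Fin n) (Fin n) ℂ) (t : ℝ) : Matrix (Fin n) (Fin n) ℂ :=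
  mpow (gmean A⁻¹ B (1/2)) t * A * mpow (gmean A⁻¹ B (1/2)) t

/-- The Wasserstein mean `A ◇ₜ B = [(1-t)I + t(A⁻¹ ♯ B)] A [(1-t)I + t(A⁻¹ ♯ B)]`. -/
def wmean {n : ℕ} (A B : Matrix (Fin n) (Fin n) ℂ) (t : ℝ) : Matrix (Fin n) (Fin n) ℂ :=
  (((1 - t : ℝ) : ℂ) • (1 : Matrix (Fin n) (Fin n) ℂ) + ((t : ℝ) : ℂ) • gmean A⁻¹ B (1/2)) * A *
    (((1 - t : ℝ) : ℂ) • (1 : Matrix (Fin n) (Fin n) ℂ) + ((t : ℝ) : ℂ) • gmean A⁻¹ B (1/2))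

/-- The arithmetic mean `A ∇ₜ B = (1-t)A + tB`. -/
def amean {n : ℕ} (A B : Matrix (Fin n) (Fin n) ℂ) (t : ℝ) : Matrix (Fin n) (Fin n) ℂ :=
  ((1 - t : ℝ) : ℂ) • A + ((t : ℝ) : ℂ) • B

/-- The matrix absolute value `|X| = (XᴴX)^{1/2}`. -/
def matAbs {n : ℕ} (X : Matrix (Fin n) (Fin n) ℂ) : Matrix (Fin n) (Fin n) ℂ :=
  mpow (Xᴴ * X) (1/2)

/-- The eigenvalues of a Hermitian matrix listed in nonincreasing order:
`eigDesc hA i` is `λ_{i+1}(A)`, so `eigDesc hA 0 = λ₁(A) ≥ eigDesc hA 1 = λ₂(A) ≥ ⋯`. -/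
def eigDesc {n : ℕ} {A : Matrix (Fin n) (Fin n) ℂ} (hA : A.IsHermitian) : Fin n → ℝ :=
  fun i => (hA.eigenvalues ∘ Tuple.sort hA.eigenvalues) i.rev

section AuxiliaryLemmas

variable {n : ℕ}

lemma contOn_spec (f : ℝ → ℝ) (C : Matrix (Fin n) (Fin n) ℂ) :
    ContinuousOn f (spectrum ℝ C) :=
  (Matrix.finite_real_spectrum (A := C)).continuousOn f

lemma contOn_image (g f : ℝ → ℝ) (C : Matrix (Fin n) (Fin n) ℂ) :
    ContinuousOn g (f '' spectrum ℝ C) :=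
  ((Matrix.finite_real_spectrum (A := C)).image f).continuousOn g

lemma spec_pos {C : Matrix (Fin n) (Fin n) ℂ} (hC : C.PosDef) :
    ∀ x ∈ spectrum ℝ C, 0 < x := by
  intro x hx
  rw [Matrix.IsHermitian.spectrum_real_eq_range_eigenvalues hC.isHermitian] at hx
  obtain ⟨i, rfl⟩ := hx
  exact hC.eigenvalues_pos i

lemma loewner_cfc_mono {C : Matrix (Fin n) (Fin n) ℂ} (hC : C.IsHermitian) {f g : ℝ → ℝ}
    (h : ∀ x ∈ spectrum ℝ C, f x ≤ g x) : LoewnerLE (cfc f C) (cfc g C) := by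
  rw [LoewnerLE, Matrix.IsHermitian.cfc_eq hC, Matrix.IsHermitian.cfc_eq hC]
  unfold Matrix.IsHermitian.cfc
  simp only [Unitary.conjStarAlgAut_apply]
  rw [← sub_mul, ← mul_sub, Matrix.diagonal_sub, Matrix.star_eq_conjTranspose]
  refine Matrix.PosSemidef.mul_mul_conjTranspose_same ?_ _
  refine Matrix.posSemidef_diagonal_iff.mpr fun i => ?_
  have := h _ (hC.eigenvalues_mem_spectrum_real i)
  simp only [Pi.sub_apply, Function.comp_apply]
  rw [← RCLike.ofReal_sub]
  exact RCLike.ofReal_nonneg.mpr (sub_nonneg.mpr this)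

lemma posDef_conj {Y B : Matrix (Fin n) (Fin n) ℂ} (hY : Y.PosDef) (hB : IsUnit B) :
    (Bᴴ * Y * B).PosDef := by
  refine Matrix.PosDef.of_dotProduct_mulVec_pos (Matrix.isHermitian_conjTranspose_mul_mul B hY.1) fun x hx => ?_
  have h1 : B *ᵥ x ≠ 0 :=
    ((Matrix.mulVec_injective_iff_isUnit.mpr hB).ne_iff' (Matrix.mulVec_zero B)).2 hx
  simpa only [Matrix.star_mulVec, Matrix.dotProduct_mulVec, Matrix.vecMul_vecMul] using hY.dotProduct_mulVec_pos h1

lemma cfc_posDef {C : Matrix (Fin n) (Fin n) ℂ} (hC : C.PosDef) {f : ℝ → ℝ}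
    (h : ∀ x ∈ spectrum ℝ C, 0 < f x) : (cfc f C).PosDef := by
  have hH := hC.isHermitian
  rw [Matrix.IsHermitian.cfc_eq hH]
  unfold Matrix.IsHermitian.cfc
  simp only [Unitary.conjStarAlgAut_apply]
  rw [Matrix.star_eq_conjTranspose]
  have hD : (Matrix.diagonal (RCLike.ofReal ∘ f ∘ hH.eigenvalues) :
      Matrix (Fin n) (Fin n) ℂ).PosDef := by
    refine Matrix.posDef_diagonal_iff.mpr fun i => ?_
    have := h _ (hH.eigenvalues_mem_spectrum_real i)
    simpa only [Function.comp_apply, RCLike.ofReal_pos] using this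
  have hU : IsUnit ((hH.eigenvectorUnitary : Matrix (Fin n) (Fin n) ℂ)ᴴ) := by
    refine ⟨⟨(hH.eigenvectorUnitary : Matrix (Fin n) (Fin n) ℂ)ᴴ,
      (hH.eigenvectorUnitary : Matrix (Fin n) (Fin n) ℂ), ?_, ?_⟩, rfl⟩
    · rw [← Matrix.star_eq_conjTranspose]
      exact Unitary.star_mul_self_of_mem (SetLike.coe_mem _)
    · rw [← Matrix.star_eq_conjTranspose]
      exact Unitary.mul_star_self_of_mem (SetLike.coe_mem _)
  simpa only [Matrix.conjTranspose_conjTranspose] using posDef_conj hD hU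

lemma mpow_posDef {A : Matrix (Fin n) (Fin n) ℂ} (hA : A.PosDef) (s : ℝ) :
    (mpow A s).PosDef :=
  cfc_posDef hA fun x hx => Real.rpow_pos_of_pos (spec_pos hA x hx) s

lemma mpow_mul_mpow {A : Matrix (Fin n) (Fin n) ℂ} (hA : A.PosDef) (s u : ℝ) :
    mpow A s * mpow A u = mpow A (s + u) := by
  have hsa : IsSelfAdjoint A := hA.isHermitian
  rw [mpow, mpow, mpow, ← cfc_mul _ _ A (contOn_spec _ _) (contOn_spec _ _)]
  exact cfc_congr fun x hx => (Real.rpow_add (spec_pos hA x hx) s u).symm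

lemma mpow_zero {A : Matrix (Fin n) (Fin n) ℂ} (hA : A.PosDef) : mpow A 0 = 1 := by
  have hsa : IsSelfAdjoint A := hA.isHermitian
  rw [mpow, cfc_congr (g := fun _ : ℝ => (1 : ℝ)) fun x _ => Real.rpow_zero x]
  exact cfc_const_one ℝ A

lemma mpow_one {A : Matrix (Fin n) (Fin n) ℂ} (hA : A.PosDef) : mpow A 1 = A := by
  have hsa : IsSelfAdjoint A := hA.isHermitian
  rw [mpow, cfc_congr (g := id) fun x _ => Real.rpow_one x]
  exact cfc_id ℝ A

lemma mpow_comp {A : Matrix (Fin n) (Fin n) ℂ} (hA : A.PosDef) (s u : ℝ) :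
    mpow (mpow A s) u = mpow A (s * u) := by
  have hsa : IsSelfAdjoint A := hA.isHermitian
  rw [mpow, mpow,
    ← cfc_comp (fun x : ℝ => x ^ u) (fun x : ℝ => x ^ s) A hsa (contOn_image _ _ _)
      (contOn_spec _ _), mpow]
  exact cfc_congr fun x hx => (Real.rpow_mul (spec_pos hA x hx).le s u).symm

lemma mpow_neg_one {A : Matrix (Fin n) (Fin n) ℂ} (hA : A.PosDef) : A⁻¹ = mpow A (-1) := by
  apply Matrix.inv_eq_right_inv
  have h : A * mpow A (-1) = mpow A 1 * mpow A (-1) := by rw [mpow_one hA]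
  rw [h, mpow_mul_mpow hA]
  norm_num [mpow_zero hA]

lemma mpow_inv {A : Matrix (Fin n) (Fin n) ℂ} (hA : A.PosDef) (s : ℝ) :
    mpow A⁻¹ s = mpow A (-s) := by
  rw [mpow_neg_one hA, mpow_comp hA, neg_one_mul]

lemma mpow_sq_half {S : Matrix (Fin n) (Fin n) ℂ} (hS : S.PosDef) :
    mpow (S * S) (1/2) = S := by
  have hsa : IsSelfAdjoint S := hS.isHermitian
  have hmul : cfc (fun x : ℝ => x * x) S = S * S := by
    rw [cfc_mul _ _ S (contOn_spec _ _) (contOn_spec _ _), cfc_id' ℝ S]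
  rw [mpow, ← hmul,
    ← cfc_comp (fun x : ℝ => x ^ (1/2 : ℝ)) (fun x : ℝ => x * x) S hsa (contOn_image _ _ _)
      (contOn_spec _ _)]
  rw [cfc_congr (g := id) fun x hx => ?_]
  · exact cfc_id ℝ S
  · have hx0 := spec_pos hS x hx
    show (x * x) ^ (1/2 : ℝ) = x
    rw [← sq, ← Real.rpow_natCast x 2, ← Real.rpow_mul hx0.le]
    norm_num

lemma gmean_inv_eq {A : Matrix (Fin n) (Fin n) ℂ} (hA : A.PosDef)
    (X : Matrix (Fin n) (Fin n) ℂ) :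
    gmean A⁻¹ X (1/2) =
      mpow A (-(1/2)) * mpow (mpow A (1/2) * X * mpow A (1/2)) (1/2) * mpow A (-(1/2)) := by
  rw [gmean, mpow_inv hA, mpow_inv hA, neg_neg]

lemma gmean_conj {A Y : Matrix (Fin n) (Fin n) ℂ} (hA : A.PosDef) (hY : Y.PosDef) :
    gmean A⁻¹ (Y * A * Y) (1/2) = Y := by
  have hH : (mpow A (1/2)).PosDef := mpow_posDef hA _
  have hH' : (mpow A (-(1/2))).PosDef := mpow_posDef hA _
  set H := mpow A (1/2) with hHdef
  set H' := mpow A (-(1/2)) with hH'def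
  have hHH : H * H = A := by rw [hHdef, mpow_mul_mpow hA]; norm_num [mpow_one hA]
  have h1 : H' * H = 1 := by rw [hH'def, hHdef, mpow_mul_mpow hA]; norm_num [mpow_zero hA]
  have h2 : H * H' = 1 := by rw [hH'def, hHdef, mpow_mul_mpow hA]; norm_num [mpow_zero hA]
  have hS : (H * Y * H).PosDef := by
    have := posDef_conj hY hH.isUnit
    rwa [hH.isHermitian.eq] at this
  have hmid : H * (Y * A * Y) * H = (H * Y * H) * (H * Y * H) := by
    rw [← hHH]; simp only [mul_assoc]
  rw [gmean_inv_eq hA, hmid, mpow_sq_half hS]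
  calc H' * (H * Y * H) * H' = (H' * H) * Y * (H * H') := by simp only [mul_assoc]
    _ = Y := by rw [h1, h2, one_mul, mul_one]

lemma gmean_posDef {A B : Matrix (Fin n) (Fin n) ℂ} (hA : A.PosDef) (hB : B.PosDef) :
    (gmean A⁻¹ B (1/2)).PosDef := by
  rw [gmean_inv_eq hA]
  have hH : (mpow A (1/2)).PosDef := mpow_posDef hA _
  have hH' : (mpow A (-(1/2))).PosDef := mpow_posDef hA _
  have hin : (mpow A (1/2) * B * mpow A (1/2)).PosDef := by
    have := posDef_conj hB hH.isUnit
    rwa [hH.isHermitian.eq] at this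
  have hK := mpow_posDef hin (1/2)
  have := posDef_conj hK hH'.isUnit
  rwa [hH'.isHermitian.eq] at this

lemma geo_conj {A B : Matrix (Fin n) (Fin n) ℂ} (hA : A.PosDef) (hB : B.PosDef) :
    gmean A⁻¹ B (1/2) * A * gmean A⁻¹ B (1/2) = B := by
  have hH : (mpow A (1/2)).PosDef := mpow_posDef hA _
  rw [gmean_inv_eq hA]
  set H := mpow A (1/2) with hHdef
  set H' := mpow A (-(1/2)) with hH'def
  have hHH : H * H = A := by rw [hHdef, mpow_mul_mpow hA]; norm_num [mpow_one hA]
  have h1 : H' * H = 1 := by rw [hH'def, hHdef, mpow_mul_mpow hA]; norm_num [mpow_zero hA]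
  have h2 : H * H' = 1 := by rw [hH'def, hHdef, mpow_mul_mpow hA]; norm_num [mpow_zero hA]
  have hcan1 : ∀ Z : Matrix (Fin n) (Fin n) ℂ, H' * (H * Z) = Z := fun Z => by
    rw [← mul_assoc, h1, one_mul]
  have hcan2 : ∀ Z : Matrix (Fin n) (Fin n) ℂ, H * (H' * Z) = Z := fun Z => by
    rw [← mul_assoc, h2, one_mul]
  have hin : (H * B * H).PosDef := by
    have := posDef_conj hB hH.isUnit
    rwa [hH.isHermitian.eq] at this
  have hKK : mpow (H * B * H) (1/2) * mpow (H * B * H) (1/2) = H * B * H := by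
    rw [mpow_mul_mpow hin]; norm_num [mpow_one hin]
  rw [← hHH]
  set K := mpow (H * B * H) (1/2) with hKdef
  calc H' * K * H' * (H * H) * (H' * K * H')
      = H' * (K * (H' * (H * (H * (H' * (K * H')))))) := by simp only [mul_assoc]
    _ = H' * (K * (K * H')) := by rw [hcan2, hcan1]
    _ = H' * ((K * K) * H') := by simp only [mul_assoc]
    _ = H' * ((H * B * H) * H') := by rw [hKK]
    _ = B := by
        simp only [mul_assoc, hcan1]
        rw [h2, mul_one]

lemma inv_eq_cfc_inv {C : Matrix (Fin n) (Fin n) ℂ} (hC : C.PosDef) :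
    C⁻¹ = cfc (fun x : ℝ => x⁻¹) C := by
  have hsa : IsSelfAdjoint C := hC.isHermitian
  apply Matrix.inv_eq_right_inv
  have h : C * cfc (fun x : ℝ => x⁻¹) C = cfc (fun x : ℝ => x * x⁻¹) C := by
    rw [cfc_mul _ _ C (contOn_spec _ _) (contOn_spec _ _), cfc_id' ℝ C]
  rw [h, cfc_congr (g := fun _ : ℝ => (1 : ℝ))
    fun x hx => mul_inv_cancel₀ (spec_pos hC x hx).ne']
  exact cfc_const_one ℝ C

lemma smul_real_eq (b : ℝ) (C : Matrix (Fin n) (Fin n) ℂ) : b • C = ((b : ℝ) : ℂ) • C := by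
  ext i j
  simp [Matrix.smul_apply, Complex.real_smul]

lemma algebraMap_eq_smul_one (a : ℝ) :
    algebraMap ℝ (Matrix (Fin n) (Fin n) ℂ) a = ((a : ℝ) : ℂ) • 1 := by
  ext i j
  simp [Matrix.algebraMap_matrix_apply, Matrix.smul_apply, Matrix.one_apply, mul_ite,
    mul_one, mul_zero, smul_eq_mul]

lemma affine_cfc {C : Matrix (Fin n) (Fin n) ℂ} (hC : C.PosDef) (a b : ℝ) :
    cfc (fun x : ℝ => a + b * x) C = ((a : ℝ) : ℂ) • 1 + ((b : ℝ) : ℂ) • C := by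
  have hsa : IsSelfAdjoint C := hC.isHermitian
  rw [cfc_const_add a (fun x : ℝ => b * x) C (contOn_spec _ _) hsa,
    cfc_const_mul b (fun x : ℝ => x) C (contOn_spec _ _), cfc_id' ℝ C,
    algebraMap_eq_smul_one, smul_real_eq b C]

lemma affine_inv_cfc {C : Matrix (Fin n) (Fin n) ℂ} (hC : C.PosDef) (a b : ℝ) :
    cfc (fun x : ℝ => a * x⁻¹ + b) C = ((a : ℝ) : ℂ) • C⁻¹ + ((b : ℝ) : ℂ) • 1 := by
  have hsa : IsSelfAdjoint C := hC.isHermitian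
  rw [cfc_add_const b (fun x : ℝ => a * x⁻¹) C (contOn_spec _ _) hsa,
    cfc_const_mul a (fun x : ℝ => x⁻¹) C (contOn_spec _ _), ← inv_eq_cfc_inv hC,
    algebraMap_eq_smul_one, smul_real_eq a C⁻¹]


end AuxiliaryLemmas

/-- for `t ∈ [0,1]`, `A⁻¹ ♯ (A ♮ₜ B) ≤ A⁻¹ ♯ (A ◇ₜ B)` and
`B⁻¹ ♯ (A ♮ₜ B) ≤ B⁻¹ ♯ (A ◇ₜ B)` in the Loewner order. -/
theorem gmean_with_smean_le_gmean_with_wmean {n : ℕ} (A B : Matrix (Fin n) (Fin n) ℂ)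
    (hA : A.PosDef) (hB : B.PosDef) :
    ∀ t : ℝ, 0 ≤ t → t ≤ 1 →
      LoewnerLE (gmean A⁻¹ (smean A B t) (1/2)) (gmean A⁻¹ (wmean A B t) (1/2)) ∧
      LoewnerLE (gmean B⁻¹ (smean A B t) (1/2)) (gmean B⁻¹ (wmean A B t) (1/2)) := by
  intro t ht0 ht1
  have hC : (gmean A⁻¹ B (1/2)).PosDef := gmean_posDef hA hB
  have hBC : gmean A⁻¹ B (1/2) * A * gmean A⁻¹ B (1/2) = B := geo_conj hA hB
  set C := gmean A⁻¹ B (1/2) with hCdef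
  have hspec := spec_pos hC
  constructor
  · -- A side
    have e1 : gmean A⁻¹ (smean A B t) (1/2) = mpow C t := by
      have hsm : smean A B t = mpow C t * A * mpow C t := rfl
      rw [hsm]
      exact gmean_conj hA (mpow_posDef hC t)
    have hDpos : (cfc (fun x : ℝ => (1 - t) + t * x) C).PosDef :=
      cfc_posDef hC fun x hx => by
        have hx' := hspec x hx
        rcases eq_or_lt_of_le ht1 with h | h
        · subst h; simpa using hx'
        · have := mul_nonneg ht0 hx'.le; linarith
    have e2 : gmean A⁻¹ (wmean A B t) (1/2) = cfc (fun x : ℝ => (1 - t) + t * x) C := by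
      have hw : wmean A B t =
          (((1 - t : ℝ) : ℂ) • (1 : Matrix (Fin n) (Fin n) ℂ) + ((t : ℝ) : ℂ) • C) * A *
          (((1 - t : ℝ) : ℂ) • (1 : Matrix (Fin n) (Fin n) ℂ) + ((t : ℝ) : ℂ) • C) := rfl
      rw [hw, ← affine_cfc hC (1 - t) t]
      exact gmean_conj hA hDpos
    rw [e1, e2]
    exact loewner_cfc_mono hC.isHermitian fun x hx => by
      have h := Real.geom_mean_le_arith_mean2_weighted (w₁ := 1 - t) (w₂ := t) (p₁ := 1)
        (p₂ := x) (by linarith) ht0 zero_le_one (hspec x hx).le (by ring)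
      rw [Real.one_rpow, one_mul, mul_one] at h
      exact h
  · -- B side
    have hY := mpow_posDef hC (t - 1)
    have h1 : mpow C (t - 1) * C = mpow C t := by
      calc mpow C (t - 1) * C = mpow C (t - 1) * mpow C 1 := by rw [mpow_one hC]
        _ = mpow C t := by rw [mpow_mul_mpow hC]; ring_nf
    have h2 : C * mpow C (t - 1) = mpow C t := by
      calc C * mpow C (t - 1) = mpow C 1 * mpow C (t - 1) := by rw [mpow_one hC]
        _ = mpow C t := by rw [mpow_mul_mpow hC]; ring_nf
    have hsm : smean A B t = mpow C (t - 1) * B * mpow C (t - 1) := by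
      show mpow C t * A * mpow C t = mpow C (t - 1) * B * mpow C (t - 1)
      rw [← hBC]
      conv_lhs => rw [← h1]
      simp only [mul_assoc]
      rw [show C * mpow C (t - 1) = mpow C (t - 1) * C from h2.trans h1.symm]
    have e3 : gmean B⁻¹ (smean A B t) (1/2) = mpow C (t - 1) := by
      rw [hsm]; exact gmean_conj hB hY
    have hdet : IsUnit C.det := hC.det_pos.ne'.isUnit
    have hD'pos : (cfc (fun x : ℝ => (1 - t) * x⁻¹ + t) C).PosDef :=
      cfc_posDef hC fun x hx => by
        have hx' := hspec x hx
        have hxi : 0 < x⁻¹ := inv_pos.2 hx'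
        rcases eq_or_lt_of_le ht0 with h | h
        · rw [← h]; simpa using hxi
        · have := mul_nonneg (by linarith : (0:ℝ) ≤ 1 - t) hxi.le; linarith
    have hD'C : cfc (fun x : ℝ => (1 - t) * x⁻¹ + t) C * C =
        ((1 - t : ℝ) : ℂ) • (1 : Matrix (Fin n) (Fin n) ℂ) + ((t : ℝ) : ℂ) • C := by
      rw [affine_inv_cfc hC, add_mul, smul_mul_assoc, smul_mul_assoc,
        Matrix.nonsing_inv_mul C hdet, one_mul]
    have hCD' : C * cfc (fun x : ℝ => (1 - t) * x⁻¹ + t) C =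
        ((1 - t : ℝ) : ℂ) • (1 : Matrix (Fin n) (Fin n) ℂ) + ((t : ℝ) : ℂ) • C := by
      rw [affine_inv_cfc hC, mul_add, mul_smul_comm, mul_smul_comm,
        Matrix.mul_nonsing_inv C hdet, mul_one]
    have hwm : wmean A B t = cfc (fun x : ℝ => (1 - t) * x⁻¹ + t) C * B *
        cfc (fun x : ℝ => (1 - t) * x⁻¹ + t) C := by
      show (((1 - t : ℝ) : ℂ) • (1 : Matrix (Fin n) (Fin n) ℂ) + ((t : ℝ) : ℂ) • C) * A *
          (((1 - t : ℝ) : ℂ) • (1 : Matrix (Fin n) (Fin n) ℂ) + ((t : ℝ) : ℂ) • C) =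
          cfc (fun x : ℝ => (1 - t) * x⁻¹ + t) C * B * cfc (fun x : ℝ => (1 - t) * x⁻¹ + t) C
      rw [← hBC]
      have hstep : cfc (fun x : ℝ => (1 - t) * x⁻¹ + t) C * (C * A * C) *
          cfc (fun x : ℝ => (1 - t) * x⁻¹ + t) C =
          (cfc (fun x : ℝ => (1 - t) * x⁻¹ + t) C * C) * A *
          (C * cfc (fun x : ℝ => (1 - t) * x⁻¹ + t) C) := by simp only [mul_assoc]
      rw [hstep, hD'C, hCD']
    have e4 : gmean B⁻¹ (wmean A B t) (1/2) = cfc (fun x : ℝ => (1 - t) * x⁻¹ + t) C := by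
      rw [hwm]; exact gmean_conj hB hD'pos
    rw [e3, e4]
    exact loewner_cfc_mono hC.isHermitian fun x hx => by
      have hx' := hspec x hx
      have h0 : x ^ (t - 1) = (x⁻¹) ^ (1 - t) := by
        rw [Real.inv_rpow hx'.le, ← Real.rpow_neg hx'.le, neg_sub]
      have h := Real.geom_mean_le_arith_mean2_weighted (w₁ := 1 - t) (w₂ := t) (p₁ := x⁻¹)
        (p₂ := 1) (by linarith) ht0 (inv_nonneg.2 hx'.le) zero_le_one (by ring)
      rw [h0]
      rw [Real.one_rpow, mul_one, mul_one] at h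
      exact h
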